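/- Let Γ_{ij}, for 1 ≤ i ≤ d and 1 ≤ j ≤ m, be Gaussian random variables with mean 0 and variance at most 1, such that for each fixed i the variables Γ_{i1}, …, Γ_{im} are mutually independent. Let Y_i := (1/m) Σ_{j=1}^m Γ_{ij}² and Y := max_{i∈[d]} Y_i. Then E[Y] ≤ 4(1 + (1 + log d)/m). -/

import Mathlib

open MeasureTheory ProbabilityTheory

set_option maxHeartbeats 1000000

open MeasureTheory ProbabilityTheory Real

lemma gauss_aux (v : NNReal) (hv1 : v ≤ 1) :
    Integrable (fun x : ℝ => rexp ((1/4) * x ^ 2)) (gaussianReal 0 v) ∧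
    ∫ x, rexp ((1/4) * x ^ 2) ∂(gaussianReal 0 v) ≤ Real.sqrt 2 := by
  rcases eq_or_ne v 0 with hv | hv
  · subst hv
    rw [gaussianReal_zero_var]
    constructor
    · refine (integrable_const (rexp ((1/4) * (0:ℝ)^2))).congr ?_
      exact ((ae_eq_dirac (fun x : ℝ => rexp ((1/4) * x ^ 2)))).symm
    · rw [integral_dirac]
      norm_num
  · have hvpos : (0:ℝ) < v := by positivity
    have hv1' : (v : ℝ) ≤ 1 := hv1
    set b : ℝ := 1 / (2 * v) - 1/4 with hb
    have hbpos : 0 < b := by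
      rw [hb]
      have : (1:ℝ)/2 ≤ 1 / (2 * v) := by
        apply one_div_le_one_div_of_le <;> nlinarith
      linarith
    have hv0 : (v:ℝ) ≠ 0 := ne_of_gt hvpos
    have hπ : π ≠ 0 := ne_of_gt pi_pos
    have hbne : b ≠ 0 := ne_of_gt hbpos
    have hρ : ∀ x : ℝ, gaussianPDFReal 0 v x * rexp ((1/4) * x ^ 2)
        = (Real.sqrt (2 * π * v))⁻¹ * rexp (-b * x ^ 2) := by
      intro x
      rw [gaussianPDFReal]
      rw [mul_assoc, ← Real.exp_add]
      congr 2
      rw [hb]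
      field_simp
      ring
    rw [gaussianReal_of_var_ne_zero 0 hv]
    have hd : (gaussianPDF 0 v) = fun x => ((Real.toNNReal (gaussianPDFReal 0 v x) : NNReal) : ENNReal) := rfl
    rw [hd]
    have hmeasd : Measurable fun x => Real.toNNReal (gaussianPDFReal 0 v x) :=
      (measurable_gaussianPDFReal 0 v).real_toNNReal
    have hsmul : ∀ x : ℝ, (Real.toNNReal (gaussianPDFReal 0 v x)) • rexp ((1/4) * x ^ 2)
        = (Real.sqrt (2 * π * v))⁻¹ * rexp (-b * x ^ 2) := by
      intro x
      rw [NNReal.smul_def, smul_eq_mul, Real.coe_toNNReal _ (gaussianPDFReal_nonneg 0 v x)]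
      exact hρ x
    have hint : Integrable (fun x : ℝ => (Real.sqrt (2 * π * v))⁻¹ * rexp (-b * x ^ 2)) := by
      exact (integrable_exp_neg_mul_sq hbpos).const_mul _
    constructor
    · rw [integrable_withDensity_iff_integrable_smul hmeasd]
      exact hint.congr (by filter_upwards with x using (hsmul x).symm)
    · rw [integral_withDensity_eq_integral_smul hmeasd]
      calc ∫ x, (Real.toNNReal (gaussianPDFReal 0 v x)) • rexp ((1/4) * x ^ 2)
          = ∫ x, (Real.sqrt (2 * π * v))⁻¹ * rexp (-b * x ^ 2) := by
            exact integral_congr_ae (by filter_upwards with x using hsmul x)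
        _ = (Real.sqrt (2 * π * v))⁻¹ * Real.sqrt (π / b) := by
            rw [integral_const_mul, integral_gaussian]
        _ = Real.sqrt ((2 * π * v)⁻¹ * (π / b)) := by
            rw [← Real.sqrt_inv, ← Real.sqrt_mul (by positivity)]
        _ ≤ Real.sqrt 2 := by
            apply Real.sqrt_le_sqrt
            have h2 : (2 * π * (v:ℝ))⁻¹ * (π / b) = 1 / (1 - v/2) := by
              have hkey : (2 * π * (v:ℝ)) * b = π * (1 - v/2) := by
                rw [hb]; field_simp; ring
              have h1v : (0:ℝ) < 1 - v/2 := by linarith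
              rw [inv_mul_eq_div, div_div, div_eq_div_iff (by positivity) (by positivity)]
              nlinarith [hkey]
            rw [h2]
            rw [div_le_iff₀ (by linarith)]
            nlinarith


/-- Let `Γᵢⱼ` (1 ≤ i ≤ d, 1 ≤ j ≤ m) be centered Gaussians with variance at most 1, such
that for each fixed `i` the row `Γᵢ₁, …, Γᵢₘ` is mutually independent. With
`Yᵢ = (1/m) Σⱼ Γᵢⱼ²` and `Y = maxᵢ Yᵢ`, we have `E[Y] ≤ 4 (1 + (1 + log d)/m)`. -/
theorem stmt_3 {Ω : Type*} [MeasurableSpace Ω] (μ : Measure Ω) [IsProbabilityMeasure μ]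
    (d m : ℕ) (hd : 1 ≤ d) (hm : 1 ≤ m)
    (Γ : Fin d → Fin m → Ω → ℝ) (v : Fin d → Fin m → NNReal)
    (hmeas : ∀ i j, Measurable (Γ i j))
    (hlaw : ∀ i j, μ.map (Γ i j) = gaussianReal 0 (v i j))
    (hvar : ∀ i j, v i j ≤ 1)
    (hindep : ∀ i, iIndepFun (fun j => Γ i j) μ) :
    ∫ ω, (⨆ i, (1 / (m : ℝ)) * ∑ j, Γ i j ω ^ 2) ∂μ ≤
      4 * (1 + (1 + Real.log d) / m) := by
  have hmpos : (0:ℝ) < m := by exact_mod_cast hm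
  have hm0 : (m:ℝ) ≠ 0 := ne_of_gt hmpos
  have hdpos : (0:ℝ) < d := by exact_mod_cast hd
  haveI : NeZero d := ⟨Nat.one_le_iff_ne_zero.mp hd⟩
  haveI : NeZero m := ⟨Nat.one_le_iff_ne_zero.mp hm⟩
  have hsmx : ∀ i j, AEStronglyMeasurable (fun x : ℝ => rexp ((1/4) * x ^ 2)) (μ.map (Γ i j)) :=
    fun i j => (((measurable_id.pow_const 2).const_mul (1/4:ℝ)).exp).aestronglyMeasurable
  -- integrability and bound for exp of squares
  have hint1 : ∀ i j, Integrable (fun ω => rexp ((1/4) * (Γ i j ω) ^ 2)) μ := by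
    intro i j
    have h : Integrable (fun x : ℝ => rexp ((1/4) * x ^ 2)) (μ.map (Γ i j)) := by
      rw [hlaw i j]; exact (gauss_aux _ (hvar i j)).1
    rwa [integrable_map_measure (hsmx i j) (hmeas i j).aemeasurable] at h
  have hintle : ∀ i j, ∫ ω, rexp ((1/4) * (Γ i j ω) ^ 2) ∂μ ≤ Real.sqrt 2 := by
    intro i j
    calc ∫ ω, rexp ((1/4) * (Γ i j ω) ^ 2) ∂μ
        = ∫ x, rexp ((1/4) * x ^ 2) ∂(μ.map (Γ i j)) :=
          (integral_map (hmeas i j).aemeasurable (hsmx i j)).symm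
      _ ≤ Real.sqrt 2 := by rw [hlaw i j]; exact (gauss_aux _ (hvar i j)).2
  -- integrability of squares
  have hsqint : ∀ i j, Integrable (fun ω => (Γ i j ω) ^ 2) μ := by
    intro i j
    refine ((hint1 i j).const_mul 4).mono' ((hmeas i j).pow_const 2).aestronglyMeasurable ?_
    filter_upwards with ω
    rw [Real.norm_eq_abs, abs_of_nonneg (by positivity)]
    nlinarith [Real.add_one_le_exp ((1/4) * (Γ i j ω) ^ 2), sq_nonneg (Γ i j ω)]
  set X : Fin d → Fin m → Ω → ℝ := fun i j ω => Γ i j ω ^ 2 with hX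
  set Y : Fin d → Ω → ℝ := fun i ω => (1 / (m : ℝ)) * ∑ j, Γ i j ω ^ 2 with hY
  have hYmeas : ∀ i, Measurable (Y i) := by
    intro i
    exact (Finset.measurable_sum Finset.univ fun j _ => (hmeas i j).pow_const 2).const_mul _
  have hYint : ∀ i, Integrable (Y i) μ :=
    fun i => (integrable_finset_sum Finset.univ fun j _ => hsqint i j).const_mul _
  have hY0 : ∀ i ω, 0 ≤ Y i ω := by
    intro i ω
    have : 0 ≤ ∑ j, Γ i j ω ^ 2 := Finset.sum_nonneg fun j _ => sq_nonneg _
    positivity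
  -- independence of the squares and mgf bound per row
  have hXindep : ∀ i, iIndepFun (X i) μ :=
    fun i => (hindep i).comp (fun _ x => x ^ 2) (fun _ => measurable_id.pow_const 2)
  have hXmeas : ∀ i j, Measurable (X i j) := fun i j => (hmeas i j).pow_const 2
  have hsum_int : ∀ i, Integrable (fun ω => rexp ((1/4) * (∑ j, X i j) ω)) μ := by
    intro i
    exact (hXindep i).integrable_exp_mul_sum (hXmeas i) (fun j _ => hint1 i j)
  have hsum_le : ∀ i, ∫ ω, rexp ((1/4) * (∑ j, X i j) ω) ∂μ ≤ Real.sqrt 2 ^ m := by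
    intro i
    have h1 : mgf (∑ j, X i j) μ (1/4) = ∏ j, mgf (X i j) μ (1/4) :=
      (hXindep i).mgf_sum (hXmeas i) Finset.univ
    have h2 : ∏ j, mgf (X i j) μ (1/4) ≤ ∏ _j : Fin m, Real.sqrt 2 := by
      refine Finset.prod_le_prod (fun j _ => mgf_nonneg) (fun j _ => ?_)
      exact hintle i j
    have h3 : ∏ _j : Fin m, Real.sqrt 2 = Real.sqrt 2 ^ m := by
      simp [Finset.prod_const, Finset.card_univ]
    calc ∫ ω, rexp ((1/4) * (∑ j, X i j) ω) ∂μ = mgf (∑ j, X i j) μ (1/4) := rfl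
      _ ≤ Real.sqrt 2 ^ m := by rw [h1]; rw [← h3]; exact h2
  -- the supremum
  have hne : (Finset.univ : Finset (Fin d)).Nonempty := Finset.univ_nonempty
  set S : Ω → ℝ := fun ω => ⨆ i, Y i ω with hSdef
  have hSsup : ∀ ω, S ω = Finset.univ.sup' hne (fun i => Y i ω) :=
    fun ω => (Finset.sup'_univ_eq_ciSup (fun i => Y i ω)).symm
  have hSmeas : Measurable S := by
    have : S = Finset.univ.sup' hne Y := by
      funext ω; rw [hSsup ω, Finset.sup'_apply]
    rw [this]
    exact Finset.measurable_sup' hne (fun i _ => hYmeas i)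
  have hS0 : ∀ ω, 0 ≤ S ω := by
    intro ω
    rw [hSsup ω]
    have i₀ : Fin d := ⟨0, hd⟩
    exact le_trans (hY0 i₀ ω) (Finset.le_sup' (fun i => Y i ω) (Finset.mem_univ i₀))
  have hSle : ∀ ω, S ω ≤ ∑ i, Y i ω := by
    intro ω
    rw [hSsup ω]
    exact Finset.sup'_le _ _ fun i _ => Finset.single_le_sum (fun i _ => hY0 i ω) (Finset.mem_univ i)
  have hSint : Integrable S μ := by
    refine (integrable_finset_sum Finset.univ fun i _ => hYint i).mono'
      hSmeas.aestronglyMeasurable ?_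
    filter_upwards with ω
    rw [Real.norm_eq_abs, abs_of_nonneg (hS0 ω)]
    exact hSle ω
  set t : ℝ := m / 4 with ht
  have htpos : 0 < t := by rw [ht]; positivity
  have hmono : Monotone fun x : ℝ => rexp (t * x) :=
    fun x y h => Real.exp_le_exp.mpr (mul_le_mul_of_nonneg_left h htpos.le)
  have hexp_eq : ∀ i ω, rexp (t * Y i ω) = rexp ((1/4) * (∑ j, X i j) ω) := by
    intro i ω
    congr 1
    rw [hY, ht]
    simp only [Finset.sum_apply, hX]
    field_simp
  have hexpS_eq : ∀ ω, rexp (t * S ω)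
      = Finset.univ.sup' hne (fun i => rexp ((1/4) * (∑ j, X i j) ω)) := by
    intro ω
    rw [hSsup ω,
      Finset.comp_sup'_eq_sup'_comp hne (fun x : ℝ => rexp (t * x)) (fun x y => hmono.map_sup x y)]
    exact Finset.sup'_congr hne rfl fun i _ => hexp_eq i ω
  have hexpS_le : ∀ ω, rexp (t * S ω) ≤ ∑ i, rexp ((1/4) * (∑ j, X i j) ω) := by
    intro ω
    rw [hexpS_eq ω]
    exact Finset.sup'_le _ _ fun i _ =>
      Finset.single_le_sum (f := fun k => rexp ((1/4) * (∑ j, X k j) ω))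
        (fun k _ => (Real.exp_pos _).le) (Finset.mem_univ i)
  have hgi : Integrable (fun ω => rexp (t * S ω)) μ := by
    refine (integrable_finset_sum Finset.univ fun i _ => hsum_int i).mono'
      ((hSmeas.const_mul t).exp).aestronglyMeasurable ?_
    filter_upwards with ω
    rw [Real.norm_eq_abs, abs_of_nonneg (Real.exp_pos _).le]
    exact hexpS_le ω
  have hIexp : ∫ ω, rexp (t * S ω) ∂μ ≤ d * Real.sqrt 2 ^ m := by
    calc ∫ ω, rexp (t * S ω) ∂μ
        ≤ ∫ ω, ∑ i, rexp ((1/4) * (∑ j, X i j) ω) ∂μ := by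
          refine integral_mono hgi (integrable_finset_sum Finset.univ fun i _ => hsum_int i) ?_
          exact hexpS_le
      _ = ∑ i, ∫ ω, rexp ((1/4) * (∑ j, X i j) ω) ∂μ :=
          integral_finset_sum Finset.univ fun i _ => hsum_int i
      _ ≤ ∑ _i : Fin d, Real.sqrt 2 ^ m := Finset.sum_le_sum fun i _ => hsum_le i
      _ = d * Real.sqrt 2 ^ m := by simp [Finset.sum_const, Finset.card_univ]
  -- Jensen
  have hconv : ConvexOn ℝ Set.univ (fun x : ℝ => rexp (t * x)) := by
    have h := convexOn_exp.comp_affineMap (LinearMap.toAffineMap (t • (LinearMap.id : ℝ →ₗ[ℝ] ℝ)))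
    simpa [Function.comp_def] using h
  have hjen : rexp (t * ∫ ω, S ω ∂μ) ≤ ∫ ω, rexp (t * S ω) ∂μ := by
    have := hconv.map_integral_le
      ((Real.continuous_exp.comp (continuous_const.mul continuous_id)).continuousOn)
      isClosed_univ (by filter_upwards with ω using Set.mem_univ _) hSint hgi
    exact this
  have hlog : t * ∫ ω, S ω ∂μ ≤ Real.log ((d : ℝ) * Real.sqrt 2 ^ m) :=
    (Real.le_log_iff_exp_le (by positivity)).mpr (hjen.trans hIexp)
  have hlogeq : Real.log ((d:ℝ) * Real.sqrt 2 ^ m) = Real.log d + m * (Real.log 2 / 2) := by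
    rw [Real.log_mul (ne_of_gt hdpos) (by positivity), Real.log_pow,
      Real.log_sqrt (by norm_num)]
  have hld : 0 ≤ Real.log d := Real.log_nonneg (by exact_mod_cast hd)
  have hl2 : Real.log 2 ≤ 1 := by
    linarith [Real.log_le_sub_one_of_pos (by norm_num : (0:ℝ) < 2)]
  calc ∫ ω, S ω ∂μ ≤ (Real.log d + m * (Real.log 2 / 2)) / ((m:ℝ)/4) := by
        rw [le_div_iff₀ (by positivity), mul_comm]
        rw [ht] at hlog
        rw [hlogeq] at hlog
        exact hlog
    _ = 4 * Real.log d / m + 2 * Real.log 2 := by field_simp; ring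
    _ ≤ 4 * (1 + (1 + Real.log d) / m) := by
        have hexp : 4 * (1 + (1 + Real.log d) / (m:ℝ)) = 4 + 4/m + 4 * Real.log d / m := by
          field_simp; ring
        have h4m : (0:ℝ) ≤ 4 / m := by positivity
        rw [hexp]; linarith
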